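/- Let X ⊂ ℓ¹(ℕ) be the union of the coordinate half-axes X_n = {t·e_n : t ∈ [0,∞)}, n ∈ ℕ, with the ℓ¹-metric. Define d on X ⊔ X' by d(x,y') = |s−t|+1 if x = t·e_n, y = s·e_{n+1}, and d(x,y') = s+t+1 otherwise (x = t·e_n ∈ X_n, y = s·e_m ∈ X_m with m ≠ n+1). Then d, extended by the ℓ¹-metric on each copy, is a metric on X ⊔ X'. -/

import Mathlib

noncomputable section
open scoped Classical

instance : Fact ((1 : ENNReal) ≤ 1) := ⟨le_rfl⟩

/-- The space `ℓ¹(ℕ)`. -/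
abbrev L1 : Type := lp (fun _ : ℕ => ℝ) 1

/-- `X ⊂ ℓ¹(ℕ)`: the union of the coordinate half-axes `X_n = {t • e_n : t ≥ 0}`. -/
def Xset : Set L1 := {x | ∃ (n : ℕ) (t : ℝ), 0 ≤ t ∧ x = lp.single 1 n t}

/-- The mixed distance: `|s - t| + 1` if `x = t • e_n`, `y = s • e_{n+1}`, and
`s + t + 1` otherwise (note `‖t • e_n‖ = t` for `t ≥ 0`). -/
def Dmix (x y : Xset) : ℝ :=
  if ∃ (n : ℕ) (t s : ℝ), 0 ≤ t ∧ 0 ≤ s ∧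
      (x : L1) = lp.single 1 n t ∧ (y : L1) = lp.single 1 (n + 1) s
  then |‖(y : L1)‖ - ‖(x : L1)‖| + 1
  else ‖(x : L1)‖ + ‖(y : L1)‖ + 1

/-- The distance on the double `X ⊔ X'`: the `ℓ¹`-distance within each copy,
and `Dmix` between the copies. -/
def Dd : Xset ⊕ Xset → Xset ⊕ Xset → ℝ
  | Sum.inl x, Sum.inl y => dist x y
  | Sum.inr x, Sum.inr y => dist x y
  | Sum.inl x, Sum.inr y => Dmix x y
  | Sum.inr x, Sum.inl y => Dmix y x

/-- A function `d : α → α → ℝ` is a metric. -/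
def IsMetric {α : Type*} (d : α → α → ℝ) : Prop :=
  (∀ p q, d p q = 0 ↔ p = q) ∧ (∀ p q, d p q = d q p) ∧ ∀ p q r, d p r ≤ d p q + d q r

/-! ### Auxiliary lemmas -/

lemma norm_single1 (n : ℕ) (t : ℝ) : ‖(lp.single 1 n t : L1)‖ = |t| := by
  have h := lp.norm_single (E := fun _ : ℕ => ℝ) (p := 1)
    (by norm_num : (0:ENNReal) < 1) n t
  simpa using h

lemma single1_zero (n : ℕ) : (lp.single 1 n (0:ℝ) : L1) = 0 := by
  apply lp.ext
  funext j
  by_cases h : j = n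
  · subst h; simp [lp.single_apply_self]
  · simp [lp.single_apply_ne _ _ _ h]

lemma single1_sub (n : ℕ) (t s : ℝ) :
    (lp.single 1 n t : L1) - lp.single 1 n s = lp.single 1 n (t - s) := by
  apply lp.ext
  funext j
  rw [lp.coeFn_sub]
  by_cases h : j = n
  · subst h; simp [lp.single_apply_self]
  · simp [lp.single_apply_ne _ _ _ h]

lemma norm_single1_sub_same (n : ℕ) (t s : ℝ) :
    ‖(lp.single 1 n t : L1) - lp.single 1 n s‖ = |t - s| := by
  rw [single1_sub, norm_single1]

lemma norm_single1_sub_ne {m n : ℕ} (h : m ≠ n) (t s : ℝ) :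
    ‖(lp.single 1 m t : L1) - lp.single 1 n s‖ = |t| + |s| := by
  classical
  set f : ℕ → ℝ := fun j => if j = m then t else -s with hf
  have hsum := lp.norm_sum_single (E := fun _ : ℕ => ℝ) (p := 1)
    (by norm_num : (0:ℝ) < (1:ENNReal).toReal) f ({m, n} : Finset ℕ)
  rw [Finset.sum_pair h, Finset.sum_pair h] at hsum
  have hfm : f m = t := by simp [hf]
  have hfn : f n = -s := by simp [hf, h.symm]
  rw [hfm, hfn] at hsum
  have hx : (lp.single 1 m t : L1) + lp.single 1 n (-s)
      = (lp.single 1 m t : L1) - lp.single 1 n s := by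
    rw [lp.single_neg]; exact (sub_eq_add_neg _ _).symm
  rw [hx] at hsum
  simpa [abs_of_nonneg (norm_nonneg _)] using hsum

lemma single1_inj {m n : ℕ} {t s : ℝ} (ht : t ≠ 0)
    (h : (lp.single 1 m t : L1) = lp.single 1 n s) : m = n ∧ t = s := by
  have hm := congrArg (fun z : L1 => z m) h
  simp only [lp.single_apply_self] at hm
  rcases eq_or_ne m n with rfl | hmn
  · refine ⟨rfl, ?_⟩
    rw [lp.single_apply_self] at hm; exact hm
  · rw [lp.single_apply_ne _ _ _ hmn] at hm
    exact absurd hm ht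

lemma dist_coe (x y : Xset) : dist x y = ‖(x : L1) - (y : L1)‖ := by
  rw [Subtype.dist_eq, dist_eq_norm]

lemma Xrep (x : Xset) :
    ∃ (n : ℕ) (t : ℝ), 0 ≤ t ∧ (x : L1) = lp.single 1 n t ∧ ‖(x : L1)‖ = t := by
  obtain ⟨n, t, ht, hx⟩ := x.2
  exact ⟨n, t, ht, hx, by rw [hx, norm_single1, abs_of_nonneg ht]⟩

lemma abs_norm_sub_le (x y : Xset) :
    |‖(y : L1)‖ - ‖(x : L1)‖| ≤ ‖(x : L1)‖ + ‖(y : L1)‖ := by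
  have hx := norm_nonneg (x : L1)
  have hy := norm_nonneg (y : L1)
  rw [abs_le]; constructor <;> linarith

lemma Dmix_lower (x y : Xset) : |‖(y : L1)‖ - ‖(x : L1)‖| + 1 ≤ Dmix x y := by
  unfold Dmix
  split_ifs with h
  · exact le_rfl
  · have := abs_norm_sub_le x y
    linarith

lemma Dmix_eq_neg {x y : Xset}
    (h : ¬∃ (n : ℕ) (t s : ℝ), 0 ≤ t ∧ 0 ≤ s ∧
      (x : L1) = lp.single 1 n t ∧ (y : L1) = lp.single 1 (n + 1) s) :
    Dmix x y = ‖(x : L1)‖ + ‖(y : L1)‖ + 1 := by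
  rw [Dmix, if_neg h]

lemma Dmix_one_le (x y : Xset) : 1 ≤ Dmix x y := by
  have h := Dmix_lower x y
  have h2 := abs_nonneg (‖(y : L1)‖ - ‖(x : L1)‖)
  linarith

/-- Triangle: mixed ≤ same-copy + mixed (moving the left point). -/
lemma keyA (p q r : Xset) : Dmix p r ≤ dist p q + Dmix q r := by
  have hpq : |‖(p : L1)‖ - ‖(q : L1)‖| ≤ dist p q := by
    rw [dist_coe]; exact abs_norm_sub_norm_le _ _
  by_cases h : ∃ (n : ℕ) (t s : ℝ), 0 ≤ t ∧ 0 ≤ s ∧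
      (p : L1) = lp.single 1 n t ∧ (r : L1) = lp.single 1 (n + 1) s
  · rw [Dmix, if_pos h]
    have h2 := Dmix_lower q r
    have h3 : |‖(r : L1)‖ - ‖(p : L1)‖| ≤
        |‖(r : L1)‖ - ‖(q : L1)‖| + |‖(q : L1)‖ - ‖(p : L1)‖| := abs_sub_le _ _ _
    have h4 : |‖(q : L1)‖ - ‖(p : L1)‖| = |‖(p : L1)‖ - ‖(q : L1)‖| := abs_sub_comm _ _
    linarith
  · rw [Dmix, if_neg h]
    by_cases h2 : ∃ (n : ℕ) (t s : ℝ), 0 ≤ t ∧ 0 ≤ s ∧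
        (q : L1) = lp.single 1 n t ∧ (r : L1) = lp.single 1 (n + 1) s
    · obtain ⟨n, t, s, ht, hs, hq, hr⟩ := h2
      obtain ⟨m, u, hu, hp, hnp⟩ := Xrep p
      have hs0 : s ≠ 0 := by
        rintro rfl
        exact h ⟨m, u, 0, hu, le_rfl, hp, by simp [hr, single1_zero]⟩
      have hu0 : u ≠ 0 := by
        rintro rfl
        exact h ⟨n, 0, s, le_rfl, hs, by simp [hp, single1_zero], hr⟩
      have hmn : m ≠ n := by
        rintro rfl
        exact h ⟨m, u, s, hu, hs, hp, hr⟩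
      rw [Dmix, if_pos ⟨n, t, s, ht, hs, hq, hr⟩]
      have hd : dist p q = u + t := by
        rw [dist_coe, hp, hq, norm_single1_sub_ne hmn, abs_of_nonneg hu, abs_of_nonneg ht]
      have hnq : ‖(q : L1)‖ = t := by rw [hq, norm_single1, abs_of_nonneg ht]
      have hnr : ‖(r : L1)‖ = s := by rw [hr, norm_single1, abs_of_nonneg hs]
      rw [hd, hnp, hnq, hnr]
      have hst : s - t ≤ |s - t| := le_abs_self _
      linarith
    · rw [Dmix, if_neg h2]
      have h3 : ‖(p : L1)‖ - ‖(q : L1)‖ ≤ dist p q := le_trans (le_abs_self _) hpq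
      linarith

/-- Triangle: mixed ≤ mixed + same-copy (moving the right point). -/
lemma keyB (p q r : Xset) : Dmix p r ≤ Dmix p q + dist q r := by
  have hqr : |‖(r : L1)‖ - ‖(q : L1)‖| ≤ dist q r := by
    rw [dist_coe, norm_sub_rev]; exact abs_norm_sub_norm_le _ _
  by_cases h : ∃ (n : ℕ) (t s : ℝ), 0 ≤ t ∧ 0 ≤ s ∧
      (p : L1) = lp.single 1 n t ∧ (r : L1) = lp.single 1 (n + 1) s
  · rw [Dmix, if_pos h]
    have h2 := Dmix_lower p q
    have h3 : |‖(r : L1)‖ - ‖(p : L1)‖| ≤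
        |‖(r : L1)‖ - ‖(q : L1)‖| + |‖(q : L1)‖ - ‖(p : L1)‖| := abs_sub_le _ _ _
    linarith
  · rw [Dmix, if_neg h]
    by_cases h2 : ∃ (n : ℕ) (t s : ℝ), 0 ≤ t ∧ 0 ≤ s ∧
        (p : L1) = lp.single 1 n t ∧ (q : L1) = lp.single 1 (n + 1) s
    · obtain ⟨n, t, s, ht, hs, hp, hq⟩ := h2
      obtain ⟨k, v, hv, hr, hnr⟩ := Xrep r
      have hv0 : v ≠ 0 := by
        rintro rfl
        exact h ⟨n, t, 0, ht, le_rfl, hp, by simp [hr, single1_zero]⟩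
      have hk : (n + 1) ≠ k := by
        rintro rfl
        exact h ⟨n, t, v, ht, hv, hp, hr⟩
      rw [Dmix, if_pos ⟨n, t, s, ht, hs, hp, hq⟩]
      have hd : dist q r = s + v := by
        rw [dist_coe, hq, hr, norm_single1_sub_ne hk, abs_of_nonneg hs, abs_of_nonneg hv]
      have hnp : ‖(p : L1)‖ = t := by rw [hp, norm_single1, abs_of_nonneg ht]
      have hnq : ‖(q : L1)‖ = s := by rw [hq, norm_single1, abs_of_nonneg hs]
      rw [hd, hnp, hnq, hnr]
      have hst : t - s ≤ |s - t| := by rw [abs_sub_comm]; exact le_abs_self _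
      linarith
    · rw [Dmix, if_neg h2]
      have h3 : ‖(r : L1)‖ - ‖(q : L1)‖ ≤ dist q r := le_trans (le_abs_self _) hqr
      linarith

/-- Triangle: same-copy ≤ mixed + mixed (common point on the right). -/
lemma keyC (p q r : Xset) : dist p q ≤ Dmix p r + Dmix q r := by
  have hub : dist p q ≤ ‖(p : L1)‖ + ‖(q : L1)‖ := by
    rw [dist_coe]; exact norm_sub_le _ _
  by_cases h1 : ∃ (n : ℕ) (t s : ℝ), 0 ≤ t ∧ 0 ≤ s ∧
      (p : L1) = lp.single 1 n t ∧ (r : L1) = lp.single 1 (n + 1) s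
  · by_cases h2 : ∃ (n : ℕ) (t s : ℝ), 0 ≤ t ∧ 0 ≤ s ∧
        (q : L1) = lp.single 1 n t ∧ (r : L1) = lp.single 1 (n + 1) s
    · obtain ⟨n, t, s, ht, hs, hp, hr1⟩ := h1
      obtain ⟨m, u, s', hu, hs', hq, hr2⟩ := h2
      rw [Dmix, if_pos ⟨n, t, s, ht, hs, hp, hr1⟩,
        Dmix, if_pos ⟨m, u, s', hu, hs', hq, hr2⟩]
      have hnp : ‖(p : L1)‖ = t := by rw [hp, norm_single1, abs_of_nonneg ht]
      have hnq : ‖(q : L1)‖ = u := by rw [hq, norm_single1, abs_of_nonneg hu]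
      have hnr : ‖(r : L1)‖ = s := by rw [hr1, norm_single1, abs_of_nonneg hs]
      by_cases hs0 : s = 0
      · subst hs0
        rw [hnp, hnq, hnr, zero_sub, zero_sub, abs_neg, abs_neg,
          abs_of_nonneg ht, abs_of_nonneg hu]
        rw [hnp, hnq] at hub
        linarith
      · have hid := single1_inj hs0 (hr1.symm.trans hr2)
        obtain ⟨hnm, hss⟩ := hid
        have hmn : m = n := by omega
        subst hmn
        have hd : dist p q = |t - u| := by
          rw [dist_coe, hp, hq, norm_single1_sub_same]
        rw [hd, hnp, hnq, hnr]
        have h3 : |t - u| ≤ |t - s| + |s - u| := abs_sub_le _ _ _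
        have h4 : |s - t| = |t - s| := abs_sub_comm _ _
        linarith
    · rw [Dmix_eq_neg h2]
      have h3 := Dmix_lower p r
      have h4 : ‖(p : L1)‖ - ‖(r : L1)‖ ≤ |‖(r : L1)‖ - ‖(p : L1)‖| := by
        rw [abs_sub_comm]; exact le_abs_self _
      linarith
  · rw [Dmix, if_neg h1]
    have h3 := Dmix_lower q r
    have h4 : ‖(q : L1)‖ - ‖(r : L1)‖ ≤ |‖(r : L1)‖ - ‖(q : L1)‖| := by
      rw [abs_sub_comm]; exact le_abs_self _
    linarith

/-- Triangle: same-copy ≤ mixed + mixed (common point on the left). -/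
lemma keyD (b a c : Xset) : dist a c ≤ Dmix b a + Dmix b c := by
  have hub : dist a c ≤ ‖(a : L1)‖ + ‖(c : L1)‖ := by
    rw [dist_coe]; exact norm_sub_le _ _
  by_cases h1 : ∃ (n : ℕ) (t s : ℝ), 0 ≤ t ∧ 0 ≤ s ∧
      (b : L1) = lp.single 1 n t ∧ (a : L1) = lp.single 1 (n + 1) s
  · by_cases h2 : ∃ (n : ℕ) (t s : ℝ), 0 ≤ t ∧ 0 ≤ s ∧
        (b : L1) = lp.single 1 n t ∧ (c : L1) = lp.single 1 (n + 1) s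
    · obtain ⟨n, t, s, ht, hs, hb1, ha⟩ := h1
      obtain ⟨m, u, s', hu, hs', hb2, hc⟩ := h2
      rw [Dmix, if_pos ⟨n, t, s, ht, hs, hb1, ha⟩,
        Dmix, if_pos ⟨m, u, s', hu, hs', hb2, hc⟩]
      have hna : ‖(a : L1)‖ = s := by rw [ha, norm_single1, abs_of_nonneg hs]
      have hnc : ‖(c : L1)‖ = s' := by rw [hc, norm_single1, abs_of_nonneg hs']
      have hnb : ‖(b : L1)‖ = t := by rw [hb1, norm_single1, abs_of_nonneg ht]
      have hnb' : ‖(b : L1)‖ = u := by rw [hb2, norm_single1, abs_of_nonneg hu]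
      by_cases ht0 : t = 0
      · subst ht0
        have hu0 : u = 0 := by rw [← hnb', hnb]
        subst hu0
        rw [hna, hnc, hnb, sub_zero, sub_zero, abs_of_nonneg hs, abs_of_nonneg hs']
        rw [hna, hnc] at hub
        linarith
      · have hid := single1_inj ht0 (hb1.symm.trans hb2)
        obtain ⟨hnm, htu⟩ := hid
        subst hnm
        have hd : dist a c = |s - s'| := by
          rw [dist_coe, ha, hc, norm_single1_sub_same]
        rw [hd, hna, hnc, hnb]
        have h3 : |s - s'| ≤ |s - t| + |t - s'| := abs_sub_le _ _ _
        have h5 : |t - s'| = |s' - t| := abs_sub_comm _ _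
        linarith
    · rw [Dmix_eq_neg h2]
      have h3 := Dmix_lower b a
      have h4 : ‖(a : L1)‖ - ‖(b : L1)‖ ≤ |‖(a : L1)‖ - ‖(b : L1)‖| := le_abs_self _
      linarith
  · rw [Dmix, if_neg h1]
    have h3 := Dmix_lower b c
    have h4 : ‖(c : L1)‖ - ‖(b : L1)‖ ≤ |‖(c : L1)‖ - ‖(b : L1)‖| := le_abs_self _
    linarith

/-- `d`, extended by the `ℓ¹`-metric on each copy, is a metric on the
double `X ⊔ X'`. -/
theorem stmt3 : IsMetric Dd := by
  refine ⟨?_, ?_, ?_⟩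
  · rintro (p | p) (q | q)
    · simp only [Dd, dist_eq_zero, Sum.inl.injEq]
    · simp only [Dd]
      constructor
      · intro h0
        have := Dmix_one_le p q
        linarith
      · intro h; cases h
    · simp only [Dd]
      constructor
      · intro h0
        have := Dmix_one_le q p
        linarith
      · intro h; cases h
    · simp only [Dd, dist_eq_zero, Sum.inr.injEq]
  · rintro (p | p) (q | q) <;> simp only [Dd] <;> rw [dist_comm]
  · rintro (a | a) (b | b) (c | c) <;> simp only [Dd]
    · exact dist_triangle a b c
    · exact keyA a b c
    · exact keyC a c b
    · exact keyB a b c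
    · have h := keyA c b a
      rw [dist_comm] at h
      linarith
    · exact keyD b a c
    · have h := keyB c b a
      rw [dist_comm] at h
      linarith
    · exact dist_triangle a b c
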